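/- Let A be a real symmetric positive definite n×n matrix, let L be a real n×n matrix with L Lᵀ = A⁻¹, and let a ∈ ℝⁿ be a nonzero vector. Set μ = aᵀ L Lᵀ a (so μ > 0) and L' = L + ((√(1 − μ/(1+μ)) − 1)/μ) · L Lᵀ a aᵀ L. Then A + a aᵀ is invertible and L' L'ᵀ = (A + a aᵀ)⁻¹. -/

import Mathlib

open Matrix

lemma vecMulVec_sandwich {n : ℕ} (a : Fin n → ℝ) (Q : Matrix (Fin n) (Fin n) ℝ) :
    vecMulVec a a * Q * vecMulVec a a = (a ⬝ᵥ Q *ᵥ a) • vecMulVec a a := by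
  ext i j
  simp [Matrix.mul_apply, Matrix.vecMulVec_apply, dotProduct, Matrix.mulVec,
    Finset.mul_sum, Finset.sum_mul]
  rw [Finset.sum_comm]
  refine Finset.sum_congr rfl fun k _ => Finset.sum_congr rfl fun l _ => ?_; ring

/-- Rank-one update of the inverse square root: if `L Lᵀ = A⁻¹` for a symmetric positive
definite `A`, `a ≠ 0`, `μ = aᵀ L Lᵀ a`, and
`L' = L + ((√(1 − μ/(1+μ)) − 1)/μ) L Lᵀ a aᵀ L`, then `A + a aᵀ` is invertible (and `μ > 0`)
and `L' L'ᵀ = (A + a aᵀ)⁻¹`. -/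
theorem rank_one_inverse_sqrt_update {n : ℕ}
    (A : Matrix (Fin n) (Fin n) ℝ) (hA : A.PosDef)
    (L : Matrix (Fin n) (Fin n) ℝ) (hL : L * Lᵀ = A⁻¹)
    (a : Fin n → ℝ) (ha : a ≠ 0)
    (μ : ℝ) (hμ : μ = a ⬝ᵥ (L * Lᵀ) *ᵥ a)
    (L' : Matrix (Fin n) (Fin n) ℝ)
    (hL' : L' = L + ((Real.sqrt (1 - μ / (1 + μ)) - 1) / μ) •
      (L * Lᵀ * Matrix.vecMulVec a a * L)) :
    0 < μ ∧ IsUnit (A + Matrix.vecMulVec a a) ∧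
      L' * L'ᵀ = (A + Matrix.vecMulVec a a)⁻¹ := by
  -- positivity of μ
  have hμpos : 0 < μ := by
    rw [hμ, hL]
    simpa using hA.inv.dotProduct_mulVec_pos ha
  have hμne : μ ≠ 0 := hμpos.ne'
  have h1μ : (1 : ℝ) + μ ≠ 0 := by positivity
  set V : Matrix (Fin n) (Fin n) ℝ := vecMulVec a a with hV
  set c : ℝ := (Real.sqrt (1 - μ / (1 + μ)) - 1) / μ with hc
  set P : Matrix (Fin n) (Fin n) ℝ := L * Lᵀ with hP
  have hVsymm : Vᵀ = V := by
    ext i j; simp [hV, vecMulVec_apply, mul_comm]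
  have hVPV : V * P * V = μ • V := by
    rw [hP, vecMulVec_sandwich, ← hμ]
  -- scalar identity
  have hsq : Real.sqrt (1 - μ / (1 + μ)) ^ 2 = 1 - μ / (1 + μ) := by
    apply Real.sq_sqrt
    have : 1 - μ / (1 + μ) = 1 / (1 + μ) := by field_simp; ring
    rw [this]; positivity
  have hscalar : 2 * c + c * c * μ = -(1 / (1 + μ)) := by
    set s := Real.sqrt (1 - μ / (1 + μ)) with hs
    have hsq2 : s ^ 2 * (1 + μ) = 1 := by
      rw [hsq]; field_simp; ring
    rw [hc]
    field_simp
    linear_combination hsq2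
  -- compute L' L'ᵀ
  have hexpand : L' * L'ᵀ = P + (2 * c + c * c * μ) • (P * V * P) := by
    have hT : (L * Lᵀ * V * L)ᵀ = Lᵀ * (V * (L * Lᵀ)) := by
      simp [Matrix.transpose_mul, hVsymm, Matrix.mul_assoc]
    rw [hL', transpose_add, transpose_smul, hT]
    have h4 : V * (L * (Lᵀ * (V * (L * Lᵀ)))) = μ • (V * (L * Lᵀ)) := by
      calc V * (L * (Lᵀ * (V * (L * Lᵀ)))) = (V * (L * Lᵀ) * V) * (L * Lᵀ) := by
            simp [Matrix.mul_assoc]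
        _ = μ • (V * (L * Lᵀ)) := by rw [← hP, hVPV, Matrix.smul_mul]
    simp only [add_mul, mul_add, Matrix.smul_mul, Matrix.mul_smul, smul_smul,
      Matrix.mul_assoc, h4, hP]
    module
  have ht : (2 * c + c * c * μ) = -(1 / (1 + μ)) := hscalar
  have hAP : A * P = 1 := by
    rw [hL]
    exact Matrix.mul_nonsing_inv A (isUnit_iff_ne_zero.mpr hA.det_pos.ne')
  -- right inverse identity
  have hright : (A + V) * (L' * L'ᵀ) = 1 := by
    rw [hexpand, ht]
    have h1 : A * (P * V * P) = V * P := by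
      calc A * (P * V * P) = (A * P) * (V * P) := by simp [Matrix.mul_assoc]
        _ = V * P := by rw [hAP, one_mul]
    have h2 : V * (P * V * P) = μ • (V * P) := by
      calc V * (P * V * P) = (V * P * V) * P := by simp [Matrix.mul_assoc]
        _ = μ • (V * P) := by rw [hVPV, Matrix.smul_mul]
    rw [add_mul, mul_add, mul_add, hAP, Matrix.mul_smul, Matrix.mul_smul, h1, h2]
    have : (1 : Matrix (Fin n) (Fin n) ℝ) + (-(1 / (1 + μ))) • (V * P) + (V * P +
        (-(1 / (1 + μ))) • μ • (V * P)) =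
        1 + (1 - 1 / (1 + μ) - (1 / (1 + μ)) * μ) • (V * P) := by
      simp only [smul_smul]
      module
    rw [this]
    have hz : 1 - 1 / (1 + μ) - (1 / (1 + μ)) * μ = 0 := by field_simp; ring
    rw [hz, zero_smul, add_zero]
  have hunit : IsUnit (A + V) := by
    rw [Matrix.isUnit_iff_isUnit_det]
    have := congrArg Matrix.det hright
    rw [Matrix.det_mul, Matrix.det_one] at this
    exact IsUnit.of_mul_eq_one _ this
  refine ⟨hμpos, hunit, ?_⟩
  exact (Matrix.inv_eq_right_inv hright).symm
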